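/- If a graph G has a cut-vertex, then G does not have two completely independent spanning trees. -/

import Mathlib

open SimpleGraph

def crossSubgraph {V : Type*} (G : SimpleGraph V) (A B : Set V) : SimpleGraph V where
  Adj a b := G.Adj a b ∧ ((a ∈ A ∧ b ∈ B) ∨ (a ∈ B ∧ b ∈ A))
  symm := by
    constructor
    rintro a b ⟨h, hc | hc⟩
    · exact ⟨h.symm, Or.inr ⟨hc.2, hc.1⟩⟩
    · exact ⟨h.symm, Or.inl ⟨hc.2, hc.1⟩⟩
  loopless := ⟨fun a h => G.loopless.irrefl a h.1⟩

/-- Every component of `H` that contains an edge also contains a cycle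
    (i.e. `H`, viewed as the edge-induced subgraph, has no tree component). -/
def NoTreeComponent {V : Type*} (H : SimpleGraph V) : Prop :=
  ∀ v : V, (∃ w, H.Adj v w) →
    ∃ w, H.Reachable v w ∧ ∃ c : H.Walk w w, c.IsCycle

def IsCIST2Partition {V : Type*} (G : SimpleGraph V) (A B : Set V) : Prop :=
  A ∪ B = Set.univ ∧ Disjoint A B ∧
  (G.induce A).Connected ∧ (G.induce B).Connected ∧
  NoTreeComponent (crossSubgraph G A B)

/-- `T 0, …, T (k-1)` are `k` completely independent spanning trees of `G`. -/
def AreCISTs {V : Type*} (G : SimpleGraph V) {k : ℕ} (T : Fin k → SimpleGraph V) : Prop :=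
  (∀ i, T i ≤ G ∧ (T i).IsTree) ∧
  ∀ i j, i ≠ j → ∀ u v : V, ∀ (p : (T i).Walk u v) (q : (T j).Walk u v),
    p.IsPath → q.IsPath →
      (∀ e ∈ p.edges, e ∉ q.edges) ∧
      (∀ w ∈ p.support, w ∈ q.support → w = u ∨ w = v)

def HasKCISTs {V : Type*} (G : SimpleGraph V) (k : ℕ) : Prop :=
  ∃ T : Fin k → SimpleGraph V, AreCISTs G T

lemma reach_induce_aux {V : Type*} {T G : SimpleGraph V} (hle : T ≤ G) (s : Set V)
    {u w : V} (p : T.Walk u w) (hp : ∀ x ∈ p.support, x ∈ s) :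
    (G.induce s).Reachable ⟨u, hp u p.start_mem_support⟩ ⟨w, hp w p.end_mem_support⟩ := by
  induction p with
  | nil => rfl
  | cons h q ih =>
      refine Reachable.trans (Adj.reachable ?_) (ih fun x hx => hp x (by simp [hx]))
      exact hle h

theorem stmt_13 {V : Type*} (G : SimpleGraph V) (v : V)
    (hcut : ¬ (G.induce (({v} : Set V)ᶜ)).Preconnected) :
    ¬ HasKCISTs G 2 := by
  classical
  rintro ⟨T, hT, hind⟩
  apply hcut
  rintro ⟨u, hu⟩ ⟨w, hw⟩
  have hu' : u ≠ v := hu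
  have hw' : w ≠ v := hw
  obtain ⟨p0⟩ := ((hT 0).2.isConnected) u w
  obtain ⟨q0⟩ := ((hT 1).2.isConnected) u w
  set p := p0.bypass with hp
  set q := q0.bypass with hq
  have hdisj := (hind 0 1 (by decide) u w p q p0.bypass_isPath q0.bypass_isPath).2
  by_cases hvp : v ∈ p.support
  · by_cases hvq : v ∈ q.support
    · rcases hdisj v hvp hvq with h | h
      · exact absurd h.symm hu'
      · exact absurd h.symm hw'
    · have hall : ∀ x ∈ q.support, x ∈ (({v} : Set V)ᶜ : Set V) := by
        intro x hx hxv
        exact hvq (Set.eq_of_mem_singleton hxv ▸ hx)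
      exact reach_induce_aux (hT 1).1 _ q hall
  · have hall : ∀ x ∈ p.support, x ∈ (({v} : Set V)ᶜ : Set V) := by
      intro x hx hxv
      exact hvp (Set.eq_of_mem_singleton hxv ▸ hx)
    exact reach_induce_aux (hT 0).1 _ p hall
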